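/- Closed-form optimal schedule with cut-offs for power costs (Theorem A.1, case r > 0). Let N ∈ ℕ, δ̄ > 0, 0 < m < 1 < M, r > 0, and let a, b ∈ ℝ^N have strictly positive entries. Consider the master problem: minimize ∑_{k=0}^{N−1} a_k δ_k over δ with m·δ̄ ≤ δ_k ≤ M·δ̄ for every k, subject to ∑_{k=0}^{N−1} b_k δ_k^{−r} = (∑_{k=0}^{N−1} b_k)·δ̄^{−r}. Assume the non-degeneracy condition: for no subset S ⊆ {0,…,N−1} does (M·δ̄)^{−r}·∑_{k∈S} b_k + (m·δ̄)^{−r}·∑_{k∉S} b_k = (∑_{k=0}^{N−1} b_k)·δ̄^{−r}. Then there exist integers N⊕, N⊖ ≥ 0 with N⊕ + N⊖ ≤ N−1 and a bijection ρ of {0,…,N−1} with ρ(k₁) < ρ(k₂) implying b_{k₁}/a_{k₁} ≥ b_{k₂}/a_{k₂}, such that, writing ⊕ = {k : ρ(k) < N⊕}, ⊖ = {k : ρ(k) > N−1−N⊖}, T = {k : N⊕ ≤ ρ(k) ≤ N−1−N⊖}, and λ̂ = δ̄ · [ ( (∑_{k=0}^{N−1} b_k) − M^{−r}·∑_{k∈⊕}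 b_k − m^{−r}·∑_{k∈⊖} b_k ) / ∑_{k∈T} (a_k^r b_k)^{1/(r+1)} ]^{−1/r}, the vector δ* given by δ*_k = M·δ̄ for k ∈ ⊕, δ*_k = λ̂·(b_k/a_k)^{1/(r+1)} for k ∈ T, and δ*_k = m·δ̄ for k ∈ ⊖, is an optimal solution of the master problem, with λ̂ > 0. -/

import Mathlib

open Finset Real

/-- Weighted AM-GM form of Bernoulli: `1 + r ≤ u^(-r) + r*u` for `u > 0`, `r > 0`. -/
lemma key_bern {r u : ℝ} (hr : 0 < r) (hu : 0 < u) : 1 + r ≤ u ^ (-r) + r * u := by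
  have hr1 : (0:ℝ) < r + 1 := by linarith
  have h := Real.geom_mean_le_arith_mean2_weighted
    (w₁ := 1/(r+1)) (w₂ := r/(r+1)) (p₁ := u ^ (-r)) (p₂ := u)
    (by positivity) (by positivity) (Real.rpow_pos_of_pos hu _).le hu.le
    (by field_simp; linarith)
  have hgm : (u ^ (-r)) ^ (1/(r+1)) * u ^ (r/(r+1)) = 1 := by
    rw [← Real.rpow_mul hu.le, ← Real.rpow_add hu,
      show -r * (1/(r+1)) + r/(r+1) = 0 by field_simp; ring, Real.rpow_zero]
  rw [hgm] at h
  have h2 : (r+1) * 1 ≤ (r+1) * (1/(r+1) * u ^ (-r) + r/(r+1) * u) :=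
    mul_le_mul_of_nonneg_left h hr1.le
  have h3 : (r+1) * (1/(r+1) * u ^ (-r) + r/(r+1) * u) = u ^ (-r) + r * u := by
    field_simp
  linarith [h2, h3.symm ▸ h2]

/-- Tangent line inequality for `f x = A x + B x^(-r)` at `s`. -/
lemma tangent_ineq {A B r s t : ℝ} (hB : 0 ≤ B) (hr : 0 < r)
    (hs : 0 < s) (ht : 0 < t) :
    A * s + B * s ^ (-r) + (A - r * B * s ^ (-(r+1))) * (t - s)
      ≤ A * t + B * t ^ (-r) := by
  have h := key_bern hr (div_pos ht hs)
  have hsr : (0:ℝ) < s ^ (-r) := Real.rpow_pos_of_pos hs _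
  rw [Real.div_rpow ht.le hs.le, div_eq_mul_inv t s] at h
  have hsplit : s ^ (-(r+1)) = s ^ (-r) * s⁻¹ := by
    rw [show -(r+1) = -r + (-1) by ring, Real.rpow_add hs, Real.rpow_neg_one]
  have h2 : (1 + r) * s ^ (-r) ≤ (t ^ (-r) / s ^ (-r) + r * (t * s⁻¹)) * s ^ (-r) :=
    mul_le_mul_of_nonneg_right h hsr.le
  rw [show (t ^ (-r) / s ^ (-r) + r * (t * s⁻¹)) * s ^ (-r)
      = t ^ (-r) + r * (t * s⁻¹) * s ^ (-r) from by
    rw [add_mul, div_mul_cancel₀ _ hsr.ne']] at h2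
  have h3 : s ^ (-r) + r * s ^ (-r) - r * (t * s⁻¹) * s ^ (-r) ≤ t ^ (-r) := by linarith
  have h4 := mul_le_mul_of_nonneg_left h3 hB
  have hss : s⁻¹ * s = 1 := inv_mul_cancel₀ hs.ne'
  have h5 : r * B * (s ^ (-r) * s⁻¹) * s = r * B * s ^ (-r) := by
    calc r * B * (s ^ (-r) * s⁻¹) * s = r * B * s ^ (-r) * (s⁻¹ * s) := by ring
      _ = r * B * s ^ (-r) := by rw [hss, mul_one]
  rw [hsplit]
  nlinarith [h4, h5]

/-- Block lemma: a finset all of whose ranks lie below all other ranks is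
exactly the initial segment of ranks. -/
lemma block_lemma {N : ℕ} (ρ : Equiv.Perm (Fin N)) (S : Finset (Fin N))
    (h : ∀ k ∈ S, ∀ j ∉ S, ρ k < ρ j) :
    ∀ k, k ∈ S ↔ (ρ k : ℕ) < S.card := by
  intro k
  constructor
  · intro hk
    have hsub : Sᶜ.image ρ ⊆ Finset.Ioi (ρ k) := by
      intro x hx
      obtain ⟨j, hj, rfl⟩ := Finset.mem_image.mp hx
      exact Finset.mem_Ioi.mpr (h k hk j (Finset.mem_compl.mp hj))
    have hcard : Sᶜ.card ≤ (Finset.Ioi (ρ k)).card := by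
      rw [← Finset.card_image_of_injective Sᶜ ρ.injective]
      exact Finset.card_le_card hsub
    rw [Fin.card_Ioi, Finset.card_compl, Fintype.card_fin] at hcard
    have h1 : S.card ≤ N := by
      simpa using Finset.card_le_card (Finset.subset_univ S)
    have h2 : 1 ≤ S.card := Finset.card_pos.mpr ⟨k, hk⟩
    have h3 : (ρ k : ℕ) < N := (ρ k).isLt
    omega
  · intro hk
    by_contra hkS
    have hsub : S.image ρ ⊆ Finset.Iio (ρ k) := by
      intro x hx
      obtain ⟨j, hj, rfl⟩ := Finset.mem_image.mp hx
      exact Finset.mem_Iio.mpr (h j hj k hkS)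
    have hcard : S.card ≤ (Finset.Iio (ρ k)).card := by
      rw [← Finset.card_image_of_injective S ρ.injective]
      exact Finset.card_le_card hsub
    rw [Fin.card_Iio] at hcard
    omega

set_option maxHeartbeats 2000000 in
/-- Closed-form optimal schedule with cut-offs for power costs
(Theorem A.1, case r > 0). -/
theorem closed_form_power_schedule_cutoff
    (N : ℕ) (δbar m M r : ℝ)
    (hδbar : 0 < δbar) (hm : 0 < m) (hm1 : m < 1) (hM : 1 < M) (hr : 0 < r)
    (a b : Fin N → ℝ) (ha : ∀ k, 0 < a k) (hb : ∀ k, 0 < b k)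
    (hnondeg : ¬ ∃ S : Finset (Fin N),
      (M * δbar) ^ (-r) * ∑ k ∈ S, b k +
        (m * δbar) ^ (-r) * ∑ k ∈ Sᶜ, b k
      = (∑ k, b k) * δbar ^ (-r)) :
    ∃ Nplus Nminus : ℕ, Nplus + Nminus ≤ N - 1 ∧
    ∃ ρ : Equiv.Perm (Fin N),
      (∀ k₁ k₂ : Fin N, ρ k₁ < ρ k₂ → b k₂ / a k₂ ≤ b k₁ / a k₁) ∧
      ∃ lam : ℝ,
        lam = δbar *
          (((∑ k, b k)
            - M ^ (-r) * ∑ k ∈ univ.filter (fun k => (ρ k : ℕ) < Nplus), b k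
            - m ^ (-r) * ∑ k ∈ univ.filter (fun k => N - 1 - Nminus < (ρ k : ℕ)), b k) /
           ∑ k ∈ univ.filter
              (fun k => Nplus ≤ (ρ k : ℕ) ∧ (ρ k : ℕ) ≤ N - 1 - Nminus),
              (a k ^ r * b k) ^ (1 / (r + 1))) ^ (-(1 / r)) ∧
        0 < lam ∧
        ∃ δstar : Fin N → ℝ,
          (∀ k, (ρ k : ℕ) < Nplus → δstar k = M * δbar) ∧
          (∀ k, Nplus ≤ (ρ k : ℕ) → (ρ k : ℕ) ≤ N - 1 - Nminus →
            δstar k = lam * (b k / a k) ^ (1 / (r + 1))) ∧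
          (∀ k, N - 1 - Nminus < (ρ k : ℕ) → δstar k = m * δbar) ∧
          -- δstar is an optimal solution of the master problem
          (∀ k, m * δbar ≤ δstar k ∧ δstar k ≤ M * δbar) ∧
          (∑ k, b k * δstar k ^ (-r) = (∑ k, b k) * δbar ^ (-r)) ∧
          (∀ δ : Fin N → ℝ,
            (∀ k, m * δbar ≤ δ k ∧ δ k ≤ M * δbar) →
            (∑ k, b k * δ k ^ (-r) = (∑ k, b k) * δbar ^ (-r)) →
            ∑ k, a k * δstar k ≤ ∑ k, a k * δ k) := by
  classical
  have hN : 0 < N := by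
    rcases Nat.eq_zero_or_pos N with h | h
    · exfalso; apply hnondeg; subst h; exact ⟨∅, by simp⟩
    · exact h
  have hNE : Nonempty (Fin N) := Fin.pos_iff_nonempty.mp hN
  have hne : (Finset.univ : Finset (Fin N)).Nonempty := Finset.univ_nonempty
  have hr1 : (0:ℝ) < r + 1 := by linarith
  have hlo : 0 < m * δbar := mul_pos hm hδbar
  have hhi : 0 < M * δbar := mul_pos (by linarith) hδbar
  have hlohi : m * δbar < M * δbar := by nlinarith
  have hloδ : m * δbar < δbar := by nlinarith
  have hδhi : δbar < M * δbar := by nlinarith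
  have hν : ∀ k, 0 < b k / a k := fun k => div_pos (hb k) (ha k)
  set c : Fin N → ℝ := fun k => (b k / a k) ^ (1/(r+1)) with hc_def
  have hc : ∀ k, 0 < c k := fun k => Real.rpow_pos_of_pos (hν k) _
  have hcν : ∀ j k : Fin N, c j < c k → b j / a j < b k / a k := by
    intro j k h
    by_contra hle
    push_neg at hle
    exact absurd (Real.rpow_le_rpow (hν k).le hle (by positivity)) (not_le.mpr h)
  set D : ℝ → Fin N → ℝ := fun l k => min (M * δbar) (max (m * δbar) (l * c k))
    with hD_def
  have hDlo : ∀ l k, m * δbar ≤ D l k := fun l k => le_min hlohi.le (le_max_left _ _)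
  have hDhi : ∀ l k, D l k ≤ M * δbar := fun l k => min_le_left _ _
  have hDpos : ∀ l k, 0 < D l k := fun l k => lt_of_lt_of_le hlo (hDlo l k)
  have hGcont : Continuous (fun l => ∑ k, b k * (D l k) ^ (-r)) := by
    apply continuous_finset_sum
    intro k _
    apply Continuous.mul continuous_const
    apply Continuous.rpow_const
    · simp only [hD_def]
      exact continuous_const.min (continuous_const.max (continuous_id.mul continuous_const))
    · intro l; exact Or.inl (hDpos l k).ne'
  set cmax := Finset.univ.sup' hne c with hcmax_def
  set cmin := Finset.univ.inf' hne c with hcmin_def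
  obtain ⟨kM, -, hkM⟩ := Finset.exists_mem_eq_sup' hne c
  obtain ⟨km, -, hkm⟩ := Finset.exists_mem_eq_inf' hne c
  have hcmax : 0 < cmax := by rw [hcmax_def, hkM]; exact hc kM
  have hcmin : 0 < cmin := by rw [hcmin_def, hkm]; exact hc km
  have hminmax : cmin ≤ cmax :=
    (Finset.inf'_le c (Finset.mem_univ kM)).trans_eq hkM.symm
  set l1 := (m * δbar) / cmax with hl1_def
  set l2 := (M * δbar) / cmin with hl2_def
  have hl1pos : 0 < l1 := div_pos hlo hcmax
  have hl1 : ∀ k, l1 * c k ≤ m * δbar := by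
    intro k
    rw [hl1_def, div_mul_eq_mul_div, div_le_iff₀ hcmax]
    exact mul_le_mul_of_nonneg_left (Finset.le_sup' c (Finset.mem_univ k)) hlo.le
  have hl2 : ∀ k, M * δbar ≤ l2 * c k := by
    intro k
    rw [hl2_def, div_mul_eq_mul_div, le_div_iff₀ hcmin]
    exact mul_le_mul_of_nonneg_left (Finset.inf'_le c (Finset.mem_univ k)) hhi.le
  have hDl1 : ∀ k, D l1 k = m * δbar := by
    intro k; simp only [hD_def]
    rw [max_eq_left (hl1 k), min_eq_right hlohi.le]
  have hDl2 : ∀ k, D l2 k = M * δbar := by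
    intro k; simp only [hD_def]
    rw [max_eq_right (hlohi.le.trans (hl2 k)), min_eq_left (hl2 k)]
  set B := ∑ k, b k with hB_def
  have hBpos : 0 < B := Finset.sum_pos (fun k _ => hb k) hne
  have hGl1 : ∑ k, b k * (D l1 k) ^ (-r) = B * (m*δbar) ^ (-r) := by
    rw [hB_def, Finset.sum_mul]
    exact Finset.sum_congr rfl fun k _ => by rw [hDl1 k]
  have hGl2 : ∑ k, b k * (D l2 k) ^ (-r) = B * (M*δbar) ^ (-r) := by
    rw [hB_def, Finset.sum_mul]
    exact Finset.sum_congr rfl fun k _ => by rw [hDl2 k]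
  have hCle1 : B * δbar ^ (-r) ≤ B * (m*δbar) ^ (-r) :=
    mul_le_mul_of_nonneg_left
      (Real.rpow_le_rpow_of_nonpos hlo hloδ.le (by linarith)) hBpos.le
  have hCle2 : B * (M*δbar) ^ (-r) ≤ B * δbar ^ (-r) :=
    mul_le_mul_of_nonneg_left
      (Real.rpow_le_rpow_of_nonpos hδbar hδhi.le (by linarith)) hBpos.le
  have hl12 : l1 ≤ l2 := div_le_div₀ hhi.le hlohi.le hcmin hminmax
  have hmem : B * δbar ^ (-r) ∈
      Set.Icc ((fun l => ∑ k, b k * (D l k) ^ (-r)) l2)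
        ((fun l => ∑ k, b k * (D l k) ^ (-r)) l1) := by
    simp only
    rw [hGl1, hGl2]
    exact ⟨hCle2, hCle1⟩
  obtain ⟨l, hlmem, hGl⟩ := intermediate_value_Icc' hl12 hGcont.continuousOn hmem
  simp only at hGl
  have hlpos : 0 < l := lt_of_lt_of_le hl1pos hlmem.1
  set P := Finset.univ.filter (fun k => M * δbar < l * c k) with hP_def
  set Q := Finset.univ.filter (fun k => l * c k < m * δbar) with hQ_def
  set T := Finset.univ.filter
    (fun k => m * δbar ≤ l * c k ∧ l * c k ≤ M * δbar) with hT_def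
  have hmemP : ∀ k, k ∈ P ↔ M * δbar < l * c k := fun k => by
    simp [hP_def]
  have hmemQ : ∀ k, k ∈ Q ↔ l * c k < m * δbar := fun k => by
    simp [hQ_def]
  have hmemT : ∀ k, k ∈ T ↔ (m * δbar ≤ l * c k ∧ l * c k ≤ M * δbar) := fun k => by
    simp [hT_def]
  have hDP : ∀ k, M * δbar < l * c k → D l k = M * δbar := by
    intro k h; simp only [hD_def]
    rw [max_eq_right (hlohi.le.trans h.le), min_eq_left h.le]
  have hDQ : ∀ k, l * c k < m * δbar → D l k = m * δbar := by
    intro k h; simp only [hD_def]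
    rw [max_eq_left h.le, min_eq_right hlohi.le]
  have hDT : ∀ k, m * δbar ≤ l * c k → l * c k ≤ M * δbar → D l k = l * c k := by
    intro k h1 h2; simp only [hD_def]
    rw [max_eq_right h1, min_eq_right h2]
  have hdisjQT : Disjoint Q T := by
    rw [Finset.disjoint_left]
    intro k hkQ hkT
    exact absurd ((hmemT k).mp hkT).1 (not_le.mpr ((hmemQ k).mp hkQ))
  have hunion : Q ∪ T = Pᶜ := by
    ext k
    rw [Finset.mem_union, Finset.mem_compl, hmemP, hmemQ, hmemT]
    constructor
    · rintro (h | ⟨h1, h2⟩) <;> push_neg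
      · exact h.le.trans hlohi.le
      · exact h2
    · intro h
      push_neg at h
      rcases lt_or_ge (l * c k) (m * δbar) with h' | h'
      · exact Or.inl h'
      · exact Or.inr ⟨h', h⟩
  have hsum : ∀ f : Fin N → ℝ,
      ∑ k, f k = ∑ k ∈ P, f k + (∑ k ∈ Q, f k + ∑ k ∈ T, f k) := by
    intro f
    rw [← Finset.sum_union hdisjQT, hunion]
    exact (Finset.sum_add_sum_compl P f).symm
  have hcardsum : P.card + (Q.card + T.card) = N := by
    have h1 : P.card + Pᶜ.card = N := by
      rw [Finset.card_add_card_compl, Fintype.card_fin]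
    rw [← hunion, Finset.card_union_of_disjoint hdisjQT] at h1
    exact h1
  have hTne : T.Nonempty := by
    rw [Finset.nonempty_iff_ne_empty]
    intro hTe
    apply hnondeg
    refine ⟨P, ?_⟩
    have hPc : Pᶜ = Q := by rw [← hunion, hTe, Finset.union_empty]
    rw [hPc, ← hGl, hsum (fun k => b k * D l k ^ (-r)), hTe, Finset.sum_empty,
      add_zero]
    have e1 : ∑ k ∈ P, b k * D l k ^ (-r) = (M * δbar) ^ (-r) * ∑ k ∈ P, b k := by
      rw [Finset.mul_sum]
      exact Finset.sum_congr rfl fun k hk => by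
        rw [hDP k ((hmemP k).mp hk)]; ring
    have e2 : ∑ k ∈ Q, b k * D l k ^ (-r) = (m * δbar) ^ (-r) * ∑ k ∈ Q, b k := by
      rw [Finset.mul_sum]
      exact Finset.sum_congr rfl fun k hk => by
        rw [hDQ k ((hmemQ k).mp hk)]; ring
    rw [e1, e2]
  have hTcard : 1 ≤ T.card := Finset.card_pos.mpr hTne
  -- the permutation
  set ρ := (Tuple.sort (fun k => -(b k / a k)))⁻¹ with hρ_def
  have hρmono : ∀ k₁ k₂ : Fin N, ρ k₁ ≤ ρ k₂ → b k₂ / a k₂ ≤ b k₁ / a k₁ := by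
    intro k₁ k₂ hle
    have h := Tuple.monotone_sort (fun k => -(b k / a k)) hle
    simp only [Function.comp, hρ_def, Equiv.Perm.coe_inv, Equiv.apply_symm_apply] at h
    linarith
  have hrank : ∀ j k : Fin N, c j < c k → ρ k < ρ j := by
    intro j k hcjk
    have hνjk : b j / a j < b k / a k := hcν j k hcjk
    rcases lt_trichotomy (ρ k) (ρ j) with h | h | h
    · exact h
    · exact absurd (ρ.injective h) (fun he => absurd hνjk (by rw [he]; exact lt_irrefl _))
    · exact absurd (hρmono j k h.le) (not_le.mpr hνjk)
  have hblockP : ∀ k, k ∈ P ↔ (ρ k : ℕ) < P.card := by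
    apply block_lemma
    intro k hk j hj
    apply hrank
    have h1 : M * δbar < l * c k := (hmemP k).mp hk
    have h2 : l * c j ≤ M * δbar := by
      by_contra hcon; push_neg at hcon; exact hj ((hmemP j).mpr hcon)
    exact lt_of_mul_lt_mul_left (h2.trans_lt h1) hlpos.le
  have hblockQc : ∀ k, k ∈ Qᶜ ↔ (ρ k : ℕ) < Qᶜ.card := by
    apply block_lemma
    intro k hk j hj
    apply hrank
    have hjQ : j ∈ Q := not_not.mp (fun hn => hj (Finset.mem_compl.mpr hn))
    have hkQ : k ∉ Q := Finset.mem_compl.mp hk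
    have h1 : l * c j < m * δbar := (hmemQ j).mp hjQ
    have h2 : m * δbar ≤ l * c k := by
      by_contra hcon; push_neg at hcon; exact hkQ ((hmemQ k).mpr hcon)
    exact lt_of_mul_lt_mul_left (h1.trans_le h2) hlpos.le
  have hQccard : Qᶜ.card = N - Q.card := by
    rw [Finset.card_compl, Fintype.card_fin]
  have hblockQ : ∀ k, k ∈ Q ↔ (N - 1 - Q.card < (ρ k : ℕ)) := by
    intro k
    have h3 : (ρ k : ℕ) < N := (ρ k).isLt
    constructor
    · intro hk
      have hh : ¬ (ρ k : ℕ) < Qᶜ.card := fun hcon =>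
        (Finset.mem_compl.mp ((hblockQc k).mpr hcon)) hk
      rw [hQccard] at hh
      omega
    · intro hk
      by_contra hkQ
      have hh : (ρ k : ℕ) < Qᶜ.card := (hblockQc k).mp (Finset.mem_compl.mpr hkQ)
      rw [hQccard] at hh
      omega
  have hblockT : ∀ k, k ∈ T ↔
      (P.card ≤ (ρ k : ℕ) ∧ (ρ k : ℕ) ≤ N - 1 - Q.card) := by
    intro k
    have h3 : (ρ k : ℕ) < N := (ρ k).isLt
    have hkPQT : k ∈ T ↔ (k ∉ P ∧ k ∉ Q) := by
      constructor
      · intro hk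
        obtain ⟨h1, h2⟩ := (hmemT k).mp hk
        exact ⟨fun hP => absurd ((hmemP k).mp hP) (not_lt.mpr h2),
          fun hQ => absurd ((hmemQ k).mp hQ) (not_lt.mpr h1)⟩
      · rintro ⟨hP, hQ⟩
        refine (hmemT k).mpr ⟨?_, ?_⟩
        · by_contra hcon; push_neg at hcon; exact hQ ((hmemQ k).mpr hcon)
        · by_contra hcon; push_neg at hcon; exact hP ((hmemP k).mpr hcon)
    rw [hkPQT, hblockP k, hblockQ k]
    omega
  -- provide the witnesses
  refine ⟨P.card, Q.card, by omega, ρ, fun k₁ k₂ h => hρmono k₁ k₂ h.le, ?_⟩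
  have hfP : Finset.univ.filter (fun k => (ρ k : ℕ) < P.card) = P := by
    ext k
    simp only [Finset.mem_filter, Finset.mem_univ, true_and]
    exact (hblockP k).symm
  have hfQ : Finset.univ.filter (fun k => N - 1 - Q.card < (ρ k : ℕ)) = Q := by
    ext k
    simp only [Finset.mem_filter, Finset.mem_univ, true_and]
    exact (hblockQ k).symm
  have hfT : Finset.univ.filter
      (fun k => P.card ≤ (ρ k : ℕ) ∧ (ρ k : ℕ) ≤ N - 1 - Q.card) = T := by
    ext k
    simp only [Finset.mem_filter, Finset.mem_univ, true_and]
    exact (hblockT k).symm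
  -- the weights
  have hwpos : ∀ k, (0:ℝ) < (a k ^ r * b k) ^ (1/(r+1)) := by
    intro k
    have h1 : 0 < a k ^ r := Real.rpow_pos_of_pos (ha k) r
    have h2 := hb k
    positivity
  have hwc : ∀ k, b k * (c k) ^ (-r) = (a k ^ r * b k) ^ (1/(r+1)) := by
    intro k
    have hbk := hb k
    have hak := ha k
    have harb : 0 < a k ^ r * b k := mul_pos (Real.rpow_pos_of_pos hak r) hbk
    have hlpos2 : 0 < b k * c k ^ (-r) :=
      mul_pos hbk (Real.rpow_pos_of_pos (hc k) _)
    apply Real.log_injOn_pos (Set.mem_Ioi.mpr hlpos2)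
      (Set.mem_Ioi.mpr (Real.rpow_pos_of_pos harb _))
    rw [Real.log_mul hbk.ne' (Real.rpow_pos_of_pos (hc k) _).ne',
      Real.log_rpow (hc k)]
    simp only [hc_def]
    rw [Real.log_rpow (hν k), Real.log_rpow harb,
      Real.log_mul (Real.rpow_pos_of_pos hak r).ne' hbk.ne',
      Real.log_rpow hak, Real.log_div hbk.ne' hak.ne']
    field_simp
    ring
  have hW : 0 < ∑ k ∈ T, (a k ^ r * b k) ^ (1/(r+1)) :=
    Finset.sum_pos (fun k _ => hwpos k) hTne
  have hδr : 0 < δbar ^ (-r) := Real.rpow_pos_of_pos hδbar _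
  have hlr : 0 < l ^ (-r) := Real.rpow_pos_of_pos hlpos _
  have hkey : δbar ^ (-r) * (B - M ^ (-r) * ∑ k ∈ P, b k - m ^ (-r) * ∑ k ∈ Q, b k)
      = l ^ (-r) * ∑ k ∈ T, (a k ^ r * b k) ^ (1/(r+1)) := by
    have hd := hGl
    rw [hsum (fun k => b k * D l k ^ (-r))] at hd
    have e1 : ∑ k ∈ P, b k * D l k ^ (-r)
        = M ^ (-r) * δbar ^ (-r) * ∑ k ∈ P, b k := by
      rw [Finset.mul_sum]
      refine Finset.sum_congr rfl fun k hk => ?_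
      rw [hDP k ((hmemP k).mp hk),
        Real.mul_rpow (by linarith : (0:ℝ) ≤ M) hδbar.le]
      ring
    have e2 : ∑ k ∈ Q, b k * D l k ^ (-r)
        = m ^ (-r) * δbar ^ (-r) * ∑ k ∈ Q, b k := by
      rw [Finset.mul_sum]
      refine Finset.sum_congr rfl fun k hk => ?_
      rw [hDQ k ((hmemQ k).mp hk), Real.mul_rpow hm.le hδbar.le]
      ring
    have e3 : ∑ k ∈ T, b k * D l k ^ (-r)
        = l ^ (-r) * ∑ k ∈ T, (a k ^ r * b k) ^ (1/(r+1)) := by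
      rw [Finset.mul_sum]
      refine Finset.sum_congr rfl fun k hk => ?_
      obtain ⟨h1, h2⟩ := (hmemT k).mp hk
      rw [hDT k h1 h2, Real.mul_rpow hlpos.le (hc k).le, ← hwc k]
      ring
    rw [e1, e2, e3] at hd
    linear_combination -hd
  have hEpos : 0 < B - M ^ (-r) * ∑ k ∈ P, b k - m ^ (-r) * ∑ k ∈ Q, b k := by
    by_contra hcon
    push_neg at hcon
    have h1 : δbar ^ (-r) * (B - M ^ (-r) * ∑ k ∈ P, b k - m ^ (-r) * ∑ k ∈ Q, b k)
        ≤ δbar ^ (-r) * 0 := mul_le_mul_of_nonneg_left hcon hδr.le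
    rw [mul_zero] at h1
    nlinarith [mul_pos hlr hW]
  refine ⟨l, ?_, hlpos, ?_⟩
  · -- the formula for lam
    rw [hfP, hfQ, hfT]
    have hEW : (B - M ^ (-r) * ∑ k ∈ P, b k - m ^ (-r) * ∑ k ∈ Q, b k)
        / (∑ k ∈ T, (a k ^ r * b k) ^ (1/(r+1))) = (l / δbar) ^ (-r) := by
      rw [Real.div_rpow hlpos.le hδbar.le, div_eq_div_iff hW.ne' hδr.ne']
      linear_combination hkey
    rw [hEW, ← Real.rpow_mul (div_pos hlpos hδbar).le,
      show (-r) * (-(1/r)) = 1 by field_simp, Real.rpow_one]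
    field_simp
  -- the schedule
  refine ⟨D l, ?_, ?_, ?_, ?_, hGl, ?_⟩
  · intro k hk
    exact hDP k ((hmemP k).mp ((hblockP k).mpr hk))
  · intro k h1 h2
    obtain ⟨ht1, ht2⟩ := (hmemT k).mp ((hblockT k).mpr ⟨h1, h2⟩)
    rw [hDT k ht1 ht2]
  · intro k hk
    exact hDQ k ((hmemQ k).mp ((hblockQ k).mpr hk))
  · intro k; exact ⟨hDlo l k, hDhi l k⟩
  · -- optimality
    intro δ hbox hcon
    set μ := l ^ (r+1) / r with hμ_def
    have hμpos : 0 < μ := div_pos (Real.rpow_pos_of_pos hlpos _) hr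
    have hkey2 : ∀ k, a k * D l k + μ * b k * (D l k) ^ (-r)
        ≤ a k * δ k + μ * b k * (δ k) ^ (-r) := by
      intro k
      have hδk : 0 < δ k := lt_of_lt_of_le hlo (hbox k).1
      have ht0 : 0 < l * c k := mul_pos hlpos (hc k)
      have hBk : 0 ≤ μ * b k := (mul_pos hμpos (hb k)).le
      have hrμb : 0 ≤ r * (μ * b k) := by positivity
      have hslope0 : r * (μ * b k) * (l * c k) ^ (-(r+1)) = a k := by
        rw [Real.mul_rpow hlpos.le (hc k).le]
        have hcr : (c k) ^ (-(r+1)) = a k / b k := by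
          simp only [hc_def]
          rw [← Real.rpow_mul (hν k).le,
            show (1/(r+1)) * (-(r+1)) = -1 by field_simp, Real.rpow_neg_one,
            inv_div]
        rw [hcr, hμ_def]
        have hll : l ^ (r+1) * l ^ (-(r+1)) = 1 := by
          rw [← Real.rpow_add hlpos, show r + 1 + -(r+1) = 0 by ring,
            Real.rpow_zero]
        calc r * (l ^ (r+1) / r * b k) * (l ^ (-(r+1)) * (a k / b k))
            = (l ^ (r+1) * l ^ (-(r+1))) * (r / r) * (b k / b k) * a k := by ring
          _ = a k := by
              rw [hll, div_self hr.ne', div_self (hb k).ne']; ring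
      by_cases h1 : M * δbar < l * c k
      · have hs : D l k = M * δbar := hDP k h1
        have htan := tangent_ineq (A := a k) (B := μ * b k) hBk hr hhi hδk
        have hmono : (l * c k) ^ (-(r+1)) ≤ (M * δbar) ^ (-(r+1)) :=
          Real.rpow_le_rpow_of_nonpos hhi h1.le (by linarith)
        have hslope : a k - r * (μ * b k) * (M * δbar) ^ (-(r+1)) ≤ 0 := by
          have hh := mul_le_mul_of_nonneg_left hmono hrμb
          linarith [hslope0, hh]
        have hts : δ k - M * δbar ≤ 0 := by linarith [(hbox k).2]
        have hprod : 0 ≤ (a k - r * (μ * b k) * (M * δbar) ^ (-(r+1)))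
            * (δ k - M * δbar) := by
          have hh := mul_nonneg (neg_nonneg.mpr hslope) (neg_nonneg.mpr hts)
          rw [neg_mul_neg] at hh
          exact hh
        rw [hs]
        linarith [htan, hprod]
      · push_neg at h1
        by_cases h2 : l * c k < m * δbar
        · have hs : D l k = m * δbar := hDQ k h2
          have htan := tangent_ineq (A := a k) (B := μ * b k) hBk hr hlo hδk
          have hmono : (m * δbar) ^ (-(r+1)) ≤ (l * c k) ^ (-(r+1)) :=
            Real.rpow_le_rpow_of_nonpos ht0 h2.le (by linarith)
          have hslope : 0 ≤ a k - r * (μ * b k) * (m * δbar) ^ (-(r+1)) := by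
            have hh := mul_le_mul_of_nonneg_left hmono hrμb
            linarith [hslope0, hh]
          have hts : 0 ≤ δ k - m * δbar := by linarith [(hbox k).1]
          have hprod : 0 ≤ (a k - r * (μ * b k) * (m * δbar) ^ (-(r+1)))
              * (δ k - m * δbar) := mul_nonneg hslope hts
          rw [hs]
          linarith [htan, hprod]
        · push_neg at h2
          have hs : D l k = l * c k := hDT k h2 h1
          have htan := tangent_ineq (A := a k) (B := μ * b k) hBk hr ht0 hδk
          have hzero : a k - r * (μ * b k) * (l * c k) ^ (-(r+1)) = 0 := by
            linarith [hslope0]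
          have hprod : (a k - r * (μ * b k) * (l * c k) ^ (-(r+1)))
              * (δ k - l * c k) = 0 := by rw [hzero, zero_mul]
          rw [hs]
          linarith [htan, hprod]
    have hsum2 := Finset.sum_le_sum (fun k (_ : k ∈ Finset.univ) => hkey2 k)
    have e1 : ∑ k, (a k * D l k + μ * b k * (D l k) ^ (-r))
        = ∑ k, a k * D l k + μ * ∑ k, b k * (D l k) ^ (-r) := by
      rw [Finset.mul_sum, ← Finset.sum_add_distrib]
      exact Finset.sum_congr rfl fun k _ => by ring
    have e2 : ∑ k, (a k * δ k + μ * b k * (δ k) ^ (-r))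
        = ∑ k, a k * δ k + μ * ∑ k, b k * (δ k) ^ (-r) := by
      rw [Finset.mul_sum, ← Finset.sum_add_distrib]
      exact Finset.sum_congr rfl fun k _ => by ring
    rw [e1, e2, hGl, hcon] at hsum2
    linarith
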